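/- For every error probability r ∈ [0,1], the channel capacity of the ribosome channel satisfies g(r) ≤ C(r) ≤ log₂ 21. -/

import Mathlib

open Finset

/-- The ribosome channel: probability of output `y` given input codon `x`,
with error probability `r` and genetic code `G`. -/
noncomputable def rib (G : Fin 64 → Fin 21) (r : ℝ) (y : Fin 21) (x : Fin 64) : ℝ :=
  if y = G x then 1 - r else r / 20

/-- Mutual information (in bits) of the ribosome channel at input distribution `q`.
Note `Real.logb 2 0 = 0`, which realizes the convention `0 · log₂ 0 = 0`. -/
noncomputable def mutualInfo (G : Fin 64 → Fin 21) (r : ℝ) (q : Fin 64 → ℝ) : ℝ :=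
  ∑ x : Fin 64, ∑ y : Fin 21,
    q x * rib G r y x *
      Real.logb 2 (rib G r y x / ∑ x' : Fin 64, q x' * rib G r y x')

/-- `q` is a probability distribution on the 64 codons. -/
def IsDist (q : Fin 64 → ℝ) : Prop := (∀ x, 0 ≤ q x) ∧ ∑ x : Fin 64, q x = 1

/-- The channel capacity: supremum of the mutual information over all input distributions. -/
noncomputable def capacity (G : Fin 64 → Fin 21) (r : ℝ) : ℝ :=
  sSup {c : ℝ | ∃ q : Fin 64 → ℝ, IsDist q ∧ c = mutualInfo G r q}

/-- `G` has the fiber sizes of the standard genetic code: exactly 2 outputs have a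
fiber of size 1, 9 of size 2, 2 of size 3, 5 of size 4, and 3 of size 6. -/
def FiberCode (G : Fin 64 → Fin 21) : Prop :=
  ((univ.filter fun y : Fin 21 => (univ.filter fun x : Fin 64 => G x = y).card = 1).card = 2) ∧
  ((univ.filter fun y : Fin 21 => (univ.filter fun x : Fin 64 => G x = y).card = 2).card = 9) ∧
  ((univ.filter fun y : Fin 21 => (univ.filter fun x : Fin 64 => G x = y).card = 3).card = 2) ∧
  ((univ.filter fun y : Fin 21 => (univ.filter fun x : Fin 64 => G x = y).card = 4).card = 5) ∧
  ((univ.filter fun y : Fin 21 => (univ.filter fun x : Fin 64 => G x = y).card = 6).card = 3)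

/-- The lower-bound function `g` of Theorem II.1 (base-2 logarithms; since
`Real.logb 2 0 = 0`, terms of the form `0 · log₂ 0` vanish as intended). -/
noncomputable def g (r : ℝ) : ℝ :=
  (1/64) * (2*(1-r) * Real.logb 2 (1280*(1-r)/(43*r+20))
    + (63*r/10) * Real.logb 2 (64*r/(43*r+20))
    + 18*(1-r) * Real.logb 2 (640*(1-r)/(11*r+20))
    + (279*r/10) * Real.logb 2 (32*r/(11*r+20))
    + 6*(1-r) * Real.logb 2 (1280*(1-r)/(r+60))
    + (61*r/10) * Real.logb 2 (64*r/(r+60))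
    + 20*(1-r) * Real.logb 2 (64*(1-r)/(4-r))
    + 15*r * Real.logb 2 (16*r/(5*(4-r)))
    + 18*(1-r) * Real.logb 2 (640*(1-r)/(60-31*r))
    + (87*r/10) * Real.logb 2 (32*r/(60-31*r)))

-- basic lemmas

lemma rib_nonneg (G : Fin 64 → Fin 21) {r : ℝ} (hr : r ∈ Set.Icc (0:ℝ) 1)
    (y : Fin 21) (x : Fin 64) : 0 ≤ rib G r y x := by
  obtain ⟨h0, h1⟩ := hr
  unfold rib; split
  · linarith
  · linarith

lemma rib_le_one (G : Fin 64 → Fin 21) {r : ℝ} (hr : r ∈ Set.Icc (0:ℝ) 1)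
    (y : Fin 21) (x : Fin 64) : rib G r y x ≤ 1 := by
  obtain ⟨h0, h1⟩ := hr
  unfold rib; split <;> linarith

lemma sum_rib_y (G : Fin 64 → Fin 21) (r : ℝ) (x : Fin 64) :
    ∑ y : Fin 21, rib G r y x = 1 := by
  have h : ∀ y : Fin 21, rib G r y x = r/20 + (if y = G x then 1 - r - r/20 else 0) := by
    intro y; unfold rib; split <;> ring
  rw [Finset.sum_congr rfl fun y _ => h y, Finset.sum_add_distrib, Finset.sum_const,
    Finset.sum_ite_eq' univ (G x) fun _ => 1 - r - r/20]
  simp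
  ring

-- upper bound

lemma mi_le_log21 (G : Fin 64 → Fin 21) {r : ℝ} (hr : r ∈ Set.Icc (0:ℝ) 1)
    {q : Fin 64 → ℝ} (hq : IsDist q) : mutualInfo G r q ≤ Real.logb 2 21 := by
  obtain ⟨hq0, hq1⟩ := hq
  set Q : Fin 21 → ℝ := fun y => ∑ x' : Fin 64, q x' * rib G r y x' with hQdef
  have hQ0 : ∀ y, 0 ≤ Q y := fun y =>
    Finset.sum_nonneg fun x _ => mul_nonneg (hq0 x) (rib_nonneg G hr y x)
  have hQ1 : ∑ y : Fin 21, Q y = 1 := by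
    rw [hQdef]
    rw [Finset.sum_comm]
    calc ∑ x : Fin 64, ∑ y : Fin 21, q x * rib G r y x
        = ∑ x : Fin 64, q x * ∑ y : Fin 21, rib G r y x := by
          refine Finset.sum_congr rfl fun x _ => ?_
          rw [Finset.mul_sum]
      _ = 1 := by simp only [sum_rib_y, mul_one]; exact hq1
  have key : mutualInfo G r q =
      (∑ x : Fin 64, ∑ y : Fin 21, q x * rib G r y x * Real.logb 2 (rib G r y x))
      - ∑ y : Fin 21, Q y * Real.logb 2 (Q y) := by
    unfold mutualInfo
    have hterm : ∀ x : Fin 64, ∀ y : Fin 21,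
        q x * rib G r y x * Real.logb 2 (rib G r y x / Q y)
        = q x * rib G r y x * Real.logb 2 (rib G r y x)
          - q x * rib G r y x * Real.logb 2 (Q y) := by
      intro x y
      by_cases h : q x * rib G r y x = 0
      · rw [h]; ring
      · have hP : rib G r y x ≠ 0 := by
          intro h'; exact h (by rw [h', mul_zero])
        have hqx : 0 < q x := lt_of_le_of_ne (hq0 x) (by
          intro h'; exact h (by rw [← h', zero_mul]))
        have hPpos : 0 < rib G r y x := lt_of_le_of_ne (rib_nonneg G hr y x) (Ne.symm hP)
        have hQpos : 0 < Q y := by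
          have := Finset.single_le_sum (f := fun x' => q x' * rib G r y x')
            (fun x' _ => mul_nonneg (hq0 x') (rib_nonneg G hr y x')) (Finset.mem_univ x)
          have hpos : 0 < q x * rib G r y x := mul_pos hqx hPpos
          exact lt_of_lt_of_le hpos this
        rw [Real.logb_div hP (ne_of_gt hQpos)]
        ring
    rw [Finset.sum_congr rfl fun x _ => Finset.sum_congr rfl fun y _ => hterm x y]
    rw [Finset.sum_congr rfl fun x _ => Finset.sum_sub_distrib (s := univ) _ _,
      Finset.sum_sub_distrib]
    congr 1
    rw [Finset.sum_comm]
    refine Finset.sum_congr rfl fun y _ => ?_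
    rw [← Finset.sum_mul]
  have h1 : (∑ x : Fin 64, ∑ y : Fin 21, q x * rib G r y x * Real.logb 2 (rib G r y x)) ≤ 0 := by
    refine Finset.sum_nonpos fun x _ => Finset.sum_nonpos fun y _ => ?_
    exact mul_nonpos_of_nonneg_of_nonpos
      (mul_nonneg (hq0 x) (rib_nonneg G hr y x))
      (Real.logb_nonpos one_lt_two (rib_nonneg G hr y x) (rib_le_one G hr y x))
  have h2 : -(∑ y : Fin 21, Q y * Real.logb 2 (Q y)) ≤ Real.logb 2 21 := by
    have gibbs : ∀ y : Fin 21, Q y - 1/21 ≤ Q y * Real.log (Q y) + Q y * Real.log 21 := by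
      intro y
      rcases eq_or_lt_of_le (hQ0 y) with h | h
      · rw [← h]; simp
      · have h21 : (0:ℝ) < 21 * Q y := by positivity
        have hlog : 1 - (21 * Q y)⁻¹ ≤ Real.log (21 * Q y) := by
          have := Real.log_le_sub_one_of_pos (inv_pos.mpr h21)
          rw [Real.log_inv] at this
          linarith
        have hmul : Real.log (21 * Q y) = Real.log 21 + Real.log (Q y) :=
          Real.log_mul (by norm_num) (ne_of_gt h)
        have hinv : Q y * (21 * Q y)⁻¹ = 1/21 := by
          field_simp
        nlinarith [mul_le_mul_of_nonneg_left hlog (le_of_lt h)]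
    have hsum : (0:ℝ) ≤ ∑ y : Fin 21, (Q y * Real.log (Q y) + Q y * Real.log 21) := by
      have := Finset.sum_le_sum fun y (_ : y ∈ (univ : Finset (Fin 21))) => gibbs y
      have hL : ∑ y : Fin 21, (Q y - 1/21) = 0 := by
        rw [Finset.sum_sub_distrib, hQ1, Finset.sum_const]
        simp
      linarith
    have hexp : ∑ y : Fin 21, (Q y * Real.log (Q y) + Q y * Real.log 21)
        = (∑ y : Fin 21, Q y * Real.log (Q y)) + Real.log 21 := by
      rw [Finset.sum_add_distrib, ← Finset.sum_mul, hQ1, one_mul]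
    have hlog2 : (0:ℝ) < Real.log 2 := Real.log_pos one_lt_two
    have hrw : ∑ y : Fin 21, Q y * Real.logb 2 (Q y)
        = (∑ y : Fin 21, Q y * Real.log (Q y)) / Real.log 2 := by
      rw [Finset.sum_div]
      refine Finset.sum_congr rfl fun y _ => ?_
      rw [Real.logb, mul_div_assoc]
    rw [hrw, Real.logb]
    rw [hexp] at hsum
    rw [← neg_div]
    exact (div_le_div_iff_of_pos_right hlog2).mpr (by linarith)
  linarith [key, h1, h2]

/-- per-fiber-size contribution -/
noncomputable def Fn (r n : ℝ) : ℝ :=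
  n * ((1-r) * Real.logb 2 ((1-r) / ((n*(1-r) + (64-n)*(r/20))/64)))
  + (64-n) * ((r/20) * Real.logb 2 ((r/20) / ((n*(1-r) + (64-n)*(r/20))/64)))

lemma sum_unif_rib (G : Fin 64 → Fin 21) (r : ℝ) (y : Fin 21) :
    ∑ x' : Fin 64, (fun _ : Fin 64 => (1:ℝ)/64) x' * rib G r y x'
      = (((univ.filter fun x : Fin 64 => G x = y).card : ℝ) * (1-r)
          + (64 - ((univ.filter fun x : Fin 64 => G x = y).card : ℝ)) * (r/20)) / 64 := by
  have hpred : (univ.filter fun x : Fin 64 => y = G x) = univ.filter fun x : Fin 64 => G x = y := by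
    apply Finset.filter_congr; intro x _; simp [eq_comm]
  have hcard : (univ.filter fun x : Fin 64 => G x = y).card ≤ 64 := by
    have := Finset.card_filter_le (univ : Finset (Fin 64)) (fun x => G x = y)
    simpa using this
  have hneg : ((univ.filter fun x : Fin 64 => ¬ y = G x).card : ℝ)
      = 64 - ((univ.filter fun x : Fin 64 => G x = y).card : ℝ) := by
    have h := Finset.card_filter_add_card_filter_not
      (s := (univ : Finset (Fin 64))) (p := fun x => y = G x)
    rw [hpred] at h
    simp only [Finset.card_univ, Fintype.card_fin] at h
    have : (univ.filter fun x : Fin 64 => ¬ y = G x).card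
        = 64 - (univ.filter fun x : Fin 64 => G x = y).card := by omega
    rw [this, Nat.cast_sub hcard]; norm_num
  simp only []
  have : ∀ x' : Fin 64, (1:ℝ)/64 * rib G r y x'
      = (if y = G x' then (1-r)/64 else (r/20)/64) := by
    intro x'; unfold rib; split <;> ring
  rw [Finset.sum_congr rfl fun x' _ => this x', Finset.sum_ite, Finset.sum_const,
    Finset.sum_const, nsmul_eq_mul, nsmul_eq_mul, hpred, hneg]
  ring

lemma rib_inner_sum (G : Fin 64 → Fin 21) (r : ℝ) (y : Fin 21) :
    ∑ x : Fin 64, rib G r y x * Real.logb 2 (rib G r y x /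
      ∑ x' : Fin 64, (fun _ : Fin 64 => (1:ℝ)/64) x' * rib G r y x')
    = Fn r ((univ.filter fun x : Fin 64 => G x = y).card : ℝ) := by
  set n : ℝ := ((univ.filter fun x : Fin 64 => G x = y).card : ℝ) with hn
  rw [Finset.sum_congr rfl fun x _ => by rw [sum_unif_rib G r y]]
  set Q : ℝ := ((n * (1-r) + (64 - n) * (r/20)) / 64) with hQ
  have hpred : (univ.filter fun x : Fin 64 => y = G x) = univ.filter fun x : Fin 64 => G x = y := by
    apply Finset.filter_congr; intro x _; simp [eq_comm]
  have hcard : (univ.filter fun x : Fin 64 => G x = y).card ≤ 64 := by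
    have := Finset.card_filter_le (univ : Finset (Fin 64)) (fun x => G x = y)
    simpa using this
  have hneg : ((univ.filter fun x : Fin 64 => ¬ y = G x).card : ℝ) = 64 - n := by
    have h := Finset.card_filter_add_card_filter_not
      (s := (univ : Finset (Fin 64))) (p := fun x => y = G x)
    rw [hpred] at h
    simp only [Finset.card_univ, Fintype.card_fin] at h
    have h2 : (univ.filter fun x : Fin 64 => ¬ y = G x).card
        = 64 - (univ.filter fun x : Fin 64 => G x = y).card := by omega
    rw [h2, Nat.cast_sub hcard, hn]; norm_num
  have hterm : ∀ x : Fin 64, rib G r y x * Real.logb 2 (rib G r y x / Q)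
      = if y = G x then (1-r) * Real.logb 2 ((1-r)/Q) else (r/20) * Real.logb 2 ((r/20)/Q) := by
    intro x; unfold rib; split <;> rfl
  rw [Finset.sum_congr rfl fun x _ => hterm x, Finset.sum_ite, Finset.sum_const,
    Finset.sum_const, nsmul_eq_mul, nsmul_eq_mul, hpred, hneg]
  rw [Fn]

lemma mi_uniform (G : Fin 64 → Fin 21) (hG : FiberCode G) (r : ℝ) :
    mutualInfo G r (fun _ => (1:ℝ)/64) = g r := by
  obtain ⟨c1, c2, c3, c4, c6⟩ := hG
  set N : Fin 21 → ℕ := fun y => (univ.filter fun x : Fin 64 => G x = y).card with hN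
  have step1 : mutualInfo G r (fun _ => (1:ℝ)/64)
      = (1/64) * ∑ y : Fin 21, Fn r (N y : ℝ) := by
    unfold mutualInfo
    rw [Finset.sum_comm, Finset.mul_sum]
    refine Finset.sum_congr rfl fun y _ => ?_
    rw [← rib_inner_sum G r y, Finset.mul_sum]
    refine Finset.sum_congr rfl fun x _ => ?_
    ring
  -- partition of Fin 21 by fiber size
  set T : ℕ → Finset (Fin 21) := fun k => univ.filter fun y => N y = k with hT
  have hdisj : ∀ k l, k ≠ l → Disjoint (T k) (T l) := by
    intro k l hkl
    rw [Finset.disjoint_left]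
    intro y hyk hyl
    rw [hT] at hyk hyl
    simp only [Finset.mem_filter] at hyk hyl
    exact hkl (hyk.2 ▸ hyl.2)
  have hcards : (T 1).card = 2 ∧ (T 2).card = 9 ∧ (T 3).card = 2 ∧ (T 4).card = 5
      ∧ (T 6).card = 3 := ⟨c1, c2, c3, c4, c6⟩
  have hd12 : Disjoint (T 1) (T 2) := hdisj 1 2 (by norm_num)
  have hd123 : Disjoint (T 1 ∪ T 2) (T 3) :=
    Finset.disjoint_union_left.mpr ⟨hdisj 1 3 (by norm_num), hdisj 2 3 (by norm_num)⟩
  have hd1234 : Disjoint (T 1 ∪ T 2 ∪ T 3) (T 4) :=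
    Finset.disjoint_union_left.mpr ⟨Finset.disjoint_union_left.mpr
      ⟨hdisj 1 4 (by norm_num), hdisj 2 4 (by norm_num)⟩, hdisj 3 4 (by norm_num)⟩
  have hd12346 : Disjoint (T 1 ∪ T 2 ∪ T 3 ∪ T 4) (T 6) :=
    Finset.disjoint_union_left.mpr ⟨Finset.disjoint_union_left.mpr ⟨Finset.disjoint_union_left.mpr
      ⟨hdisj 1 6 (by norm_num), hdisj 2 6 (by norm_num)⟩, hdisj 3 6 (by norm_num)⟩,
      hdisj 4 6 (by norm_num)⟩
  have hunion : T 1 ∪ T 2 ∪ T 3 ∪ T 4 ∪ T 6 = univ := by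
    apply Finset.eq_univ_of_card
    rw [Finset.card_union_of_disjoint hd12346, Finset.card_union_of_disjoint hd1234,
      Finset.card_union_of_disjoint hd123, Finset.card_union_of_disjoint hd12,
      c1, c2, c3, c4, c6]
    simp
  have hpart : ∀ k : ℕ, ∑ y ∈ T k, Fn r (N y : ℝ) = (T k).card * Fn r (k : ℝ) := by
    intro k
    have hc : ∀ y ∈ T k, Fn r (N y : ℝ) = Fn r (k : ℝ) := by
      intro y hy
      have hk : N y = k := by
        have := hy
        simp only [hT, Finset.mem_filter] at this
        exact this.2
      rw [hk]
    rw [Finset.sum_congr rfl hc, Finset.sum_const, nsmul_eq_mul]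
  have step2 : ∑ y : Fin 21, Fn r (N y : ℝ)
      = 2 * Fn r 1 + 9 * Fn r 2 + 2 * Fn r 3 + 5 * Fn r 4 + 3 * Fn r 6 := by
    rw [← hunion, Finset.sum_union hd12346, Finset.sum_union hd1234,
      Finset.sum_union hd123, Finset.sum_union hd12,
      hpart 1, hpart 2, hpart 3, hpart 4, hpart 6, c1, c2, c3, c4, c6]
    norm_num
  rw [step1, step2]
  -- final algebraic identity
  unfold Fn g
  have e1 : ((1:ℝ)*(1-r) + (64-1)*(r/20))/64 = (43*r+20)/1280 := by ring
  have e2 : ((2:ℝ)*(1-r) + (64-2)*(r/20))/64 = (11*r+20)/640 := by ring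
  have e3 : ((3:ℝ)*(1-r) + (64-3)*(r/20))/64 = (r+60)/1280 := by ring
  have e4 : ((4:ℝ)*(1-r) + (64-4)*(r/20))/64 = (4-r)/64 := by ring
  have e6 : ((6:ℝ)*(1-r) + (64-6)*(r/20))/64 = (60-31*r)/640 := by ring
  rw [e1, e2, e3, e4, e6]
  rw [div_div_eq_mul_div (1-r), div_div_eq_mul_div (r/20),
    div_div_eq_mul_div (1-r), div_div_eq_mul_div (r/20),
    div_div_eq_mul_div (1-r), div_div_eq_mul_div (r/20),
    div_div_eq_mul_div (1-r), div_div_eq_mul_div (r/20),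
    div_div_eq_mul_div (1-r), div_div_eq_mul_div (r/20)]
  rw [show (1-r)*(1280:ℝ)/(43*r+20) = 1280*(1-r)/(43*r+20) from by ring,
    show (r/20)*(1280:ℝ)/(43*r+20) = 64*r/(43*r+20) from by ring,
    show (1-r)*(640:ℝ)/(11*r+20) = 640*(1-r)/(11*r+20) from by ring,
    show (r/20)*(640:ℝ)/(11*r+20) = 32*r/(11*r+20) from by ring,
    show (1-r)*(1280:ℝ)/(r+60) = 1280*(1-r)/(r+60) from by ring,
    show (r/20)*(1280:ℝ)/(r+60) = 64*r/(r+60) from by ring,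
    show (1-r)*(64:ℝ)/(4-r) = 64*(1-r)/(4-r) from by ring,
    show (r/20)*(64:ℝ)/(4-r) = 16*r/(5*(4-r)) from by rw [← div_div]; ring,
    show (1-r)*(640:ℝ)/(60-31*r) = 640*(1-r)/(60-31*r) from by ring,
    show (r/20)*(640:ℝ)/(60-31*r) = 32*r/(60-31*r) from by ring]
  push_cast
  ring

theorem ribosome_capacity_bounds (G : Fin 64 → Fin 21) (hG : FiberCode G)
    (r : ℝ) (hr : r ∈ Set.Icc (0 : ℝ) 1) :
    g r ≤ capacity G r ∧ capacity G r ≤ Real.logb 2 21 := by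
  have hq : IsDist (fun _ : Fin 64 => (1:ℝ)/64) := by
    constructor
    · intro x; norm_num
    · rw [Finset.sum_const]; norm_num
  have hub : ∀ c ∈ {c : ℝ | ∃ q : Fin 64 → ℝ, IsDist q ∧ c = mutualInfo G r q},
      c ≤ Real.logb 2 21 := by
    rintro c ⟨q, hq', rfl⟩
    exact mi_le_log21 G hr hq'
  have hmem : g r ∈ {c : ℝ | ∃ q : Fin 64 → ℝ, IsDist q ∧ c = mutualInfo G r q} :=
    ⟨_, hq, (mi_uniform G hG r).symm⟩
  constructor
  · exact le_csSup ⟨Real.logb 2 21, hub⟩ hmem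
  · exact Real.sSup_le hub (Real.logb_nonneg one_lt_two (by norm_num))
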